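/- Every point of PG(3,4) not lying on a hyperbolic quadric H is incident with exactly 6 lines disjoint from H. -/

import Mathlib

/-- The underlying 4-dimensional vector space of `PG(3,F)`. -/
abbrev Vv (F : Type) [Field F] : Type := Fin 4 → F

/-- A point of `PG(3,F)`: a 1-dimensional subspace. -/
def IsPoint (F : Type) [Field F] (W : Submodule F (Vv F)) : Prop :=
  Module.finrank F W = 1

/-- A line of `PG(3,F)`: a 2-dimensional subspace. -/
def IsLine (F : Type) [Field F] (W : Submodule F (Vv F)) : Prop :=
  Module.finrank F W = 2

/-- A plane of `PG(3,F)`: a 3-dimensional subspace. -/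
def IsPlane (F : Type) [Field F] (W : Submodule F (Vv F)) : Prop :=
  Module.finrank F W = 3

/-- `Q` is a nondegenerate quadratic form of plus type (Witt index 2) in 4 variables:
up to an invertible linear change of coordinates it is `x₀x₁ + x₂x₃`. -/
def IsHyperbolicForm (F : Type) [Field F] (Q : Vv F → F) : Prop :=
  ∃ e : Vv F ≃ₗ[F] Vv F, ∀ x, Q x = e x 0 * e x 1 + e x 2 * e x 3

/-- A projective subspace lies on the quadric if `Q` vanishes on it. -/
def OnQuadric (F : Type) [Field F] (Q : Vv F → F) (W : Submodule F (Vv F)) : Prop :=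
  ∀ v ∈ W, Q v = 0

/-! ### The concrete field with four elements -/

inductive GF4 : Type | O | I | A | B
deriving DecidableEq

namespace GF4

instance : Fintype GF4 :=
  ⟨⟨↑[O, I, A, B], by decide⟩, fun x => by cases x <;> decide⟩

def add' : GF4 → GF4 → GF4
  | O, x => x | x, O => x
  | I, I => O | I, A => B | I, B => A
  | A, I => B | A, A => O | A, B => I
  | B, I => A | B, A => I | B, B => O

def mul' : GF4 → GF4 → GF4
  | O, _ => O | _, O => O
  | I, x => x | x, I => x
  | A, A => B | A, B => I
  | B, A => I | B, B => A

def inv' : GF4 → GF4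
  | O => O | I => I | A => B | B => A

instance : Zero GF4 := ⟨O⟩
instance : One GF4 := ⟨I⟩
instance : Add GF4 := ⟨add'⟩
instance : Mul GF4 := ⟨mul'⟩
instance : Neg GF4 := ⟨id⟩
instance : Inv GF4 := ⟨inv'⟩

instance : AddCommGroup GF4 where
  add_assoc := by decide
  zero_add := by decide
  add_zero := by decide
  add_comm := by decide
  neg_add_cancel := by decide
  nsmul := nsmulRec
  zsmul := zsmulRec

instance : CommRing GF4 :=
  { (inferInstance : AddCommGroup GF4) with
    left_distrib := by decide
    right_distrib := by decide
    zero_mul := by decide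
    mul_zero := by decide
    mul_assoc := by decide
    one_mul := by decide
    mul_one := by decide
    mul_comm := by decide }

instance : Field GF4 :=
  { (inferInstance : CommRing GF4) with
    exists_pair_ne := ⟨O, I, by decide⟩
    mul_inv_cancel := by decide
    inv_zero := by decide
    nnqsmul := _
    qsmul := _ }

lemma card4 : Fintype.card GF4 = 4 := rfl

lemma add_self (a : GF4) : a + a = 0 := by revert a; decide

lemma sq_surj (d : GF4) : ∃ s : GF4, s * s = d := by revert d; decide

lemma ext_crit (c d : GF4) (hc : c ≠ 0) :
    (∀ t : GF4, t * t * c + t + d ≠ 0) ↔ (d * c ≠ 0 ∧ d * c ≠ 1) := by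
  revert c d; decide

end GF4

/-! ### The standard hyperbolic form on `GF4^4` -/

open Submodule Finset

noncomputable section

def Qs (x : Vv GF4) : GF4 := x 0 * x 1 + x 2 * x 3

def Bf (x y : Vv GF4) : GF4 := x 0 * y 1 + x 1 * y 0 + x 2 * y 3 + x 3 * y 2

lemma Qs_smul (c : GF4) (x : Vv GF4) : Qs (c • x) = c * c * Qs x := by
  simp only [Qs, Pi.smul_apply, smul_eq_mul]; ring

lemma Qs_add (x y : Vv GF4) : Qs (x + y) = Qs x + Qs y + Bf x y := by
  simp only [Qs, Bf, Pi.add_apply]; ring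

lemma Bf_add (v x y : Vv GF4) : Bf v (x + y) = Bf v x + Bf v y := by
  simp only [Bf, Pi.add_apply]; ring

lemma Bf_smul (v : Vv GF4) (c : GF4) (x : Vv GF4) : Bf v (c • x) = c * Bf v x := by
  simp only [Bf, Pi.smul_apply, smul_eq_mul]; ring

lemma Bf_smul_left (c : GF4) (x y : Vv GF4) : Bf (c • x) y = c * Bf x y := by
  simp only [Bf, Pi.smul_apply, smul_eq_mul]; ring

lemma Bf_self (x : Vv GF4) : Bf x x = 0 := by
  have : Bf x x = (x 0 * x 1 + x 2 * x 3) + (x 0 * x 1 + x 2 * x 3) := by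
    simp only [Bf]; ring
  rw [this, GF4.add_self]

lemma Bf_zero (v : Vv GF4) : Bf v 0 = 0 := by simp [Bf]

lemma Qs_line (v u : Vv GF4) (a b : GF4) :
    Qs (a • v + b • u) = a * a * Qs v + a * b * Bf v u + b * b * Qs u := by
  simp only [Qs, Bf, Pi.add_apply, Pi.smul_apply, smul_eq_mul]; ring

/-- The decidable predicate on vectors classifying external lines through `span {v}`. -/
def Pred (v u : Vv GF4) : Prop :=
  Bf v u = 1 ∧ Qs u * Qs v ≠ 0 ∧ Qs u * Qs v ≠ 1

instance (v : Vv GF4) : DecidablePred (Pred v) := fun u => by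
  unfold Pred; infer_instance

set_option maxRecDepth 100000 in
set_option maxHeartbeats 8000000 in
/-- The big counting fact, by brute force. -/
lemma countT : ∀ v : Vv GF4, Qs v ≠ 0 →
    (Finset.univ.filter (Pred v)).card = 24 := by
  decide

end
section GF4Geometry

open Submodule Finset

lemma span_singleton_onQuadric {w : Vv GF4} (h0 : Qs w = 0) :
    OnQuadric GF4 Qs (Submodule.span GF4 {w}) := by
  intro z hz
  obtain ⟨c, rfl⟩ := Submodule.mem_span_singleton.1 hz
  rw [Qs_smul, h0, mul_zero]

lemma line_finrank {v u : Vv GF4} (hv0 : v ≠ 0) (hBu : Bf v u = 1) :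
    Module.finrank GF4 (Submodule.span GF4 {v, u} : Submodule GF4 (Vv GF4)) = 2 := by
  have hli : LinearIndependent GF4 ![v, u] := by
    rw [LinearIndependent.pair_iff]
    intro s t hst
    have hB := congrArg (Bf v) hst
    rw [Bf_add, Bf_smul, Bf_smul, Bf_self, hBu, Bf_zero, mul_zero, mul_one, zero_add] at hB
    subst hB
    rw [zero_smul, add_zero] at hst
    exact ⟨(smul_eq_zero.1 hst).resolve_right hv0, rfl⟩
  have hr : Set.range ![v, u] = {v, u} := by
    simp [Matrix.range_cons, Matrix.range_empty, Set.pair_comm]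
  have h2 := finrank_span_eq_card hli
  rw [hr] at h2
  simpa using h2

lemma ext_iff {v u : Vv GF4} (hQv : Qs v ≠ 0) (hBu : Bf v u = 1) :
    (∀ w ∈ Submodule.span GF4 {v, u}, w ≠ 0 → Qs w ≠ 0) ↔
      (Qs u * Qs v ≠ 0 ∧ Qs u * Qs v ≠ 1) := by
  constructor
  · intro h
    rw [← GF4.ext_crit _ _ hQv]
    intro t
    have hwmem : t • v + u ∈ Submodule.span GF4 {v, u} := by
      refine add_mem (smul_mem _ _ (subset_span ?_)) (subset_span ?_) <;> simp
    have hBw : Bf v (t • v + u) = 1 := by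
      rw [Bf_add, Bf_smul, Bf_self, hBu, mul_zero, zero_add]
    have hw0 : t • v + u ≠ 0 := by
      intro h0
      rw [h0, Bf_zero] at hBw
      exact one_ne_zero hBw.symm
    have hQ := h _ hwmem hw0
    have hQw : Qs (t • v + u) = t * t * Qs v + t + Qs u := by
      have h1 : t • v + u = t • v + (1 : GF4) • u := by rw [one_smul]
      rw [h1, Qs_line, hBu]; ring
    rwa [hQw] at hQ
  · intro hcond w hw hw0
    obtain ⟨a, b, hab⟩ := Submodule.mem_span_pair.1 hw
    rcases eq_or_ne b 0 with hb | hb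
    · subst hb
      rw [zero_smul, add_zero] at hab
      have ha : a ≠ 0 := by rintro rfl; rw [zero_smul] at hab; exact hw0 hab.symm
      rw [← hab, Qs_smul]
      exact mul_ne_zero (mul_ne_zero ha ha) hQv
    · have hQw : Qs w = b * b * ((a * b⁻¹) * (a * b⁻¹) * Qs v + (a * b⁻¹) + Qs u) := by
        rw [← hab, Qs_line, hBu]
        field_simp
      rw [hQw]
      exact mul_ne_zero (mul_ne_zero hb hb)
        ((GF4.ext_crit _ _ hQv).2 hcond (a * b⁻¹))

theorem gf4_count (p : Submodule GF4 (Vv GF4)) (hp : IsPoint GF4 p)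
    (hpH : ¬ OnQuadric GF4 Qs p) :
    {L : Submodule GF4 (Vv GF4) | IsLine GF4 L ∧ p ≤ L ∧
      ∀ q : Submodule GF4 (Vv GF4), IsPoint GF4 q → q ≤ L → ¬ OnQuadric GF4 Qs q}.ncard
      = 6 := by
  classical
  have hpbot : p ≠ ⊥ := by
    intro h
    rw [IsPoint, h] at hp
    simp [finrank_bot] at hp
  obtain ⟨v, hvp, hv0⟩ := Submodule.exists_mem_ne_zero_of_ne_bot hpbot
  have hpv : p = Submodule.span GF4 {v} := by
    refine (Submodule.eq_of_le_of_finrank_le ?_ ?_).symm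
    · rwa [Submodule.span_le, Set.singleton_subset_iff]
    · rw [hp, finrank_span_singleton hv0]
  have hQv : Qs v ≠ 0 := by
    intro h
    exact hpH (hpv ▸ span_singleton_onQuadric h)
  subst hpv
  set f : Vv GF4 → Submodule GF4 (Vv GF4) := fun u => Submodule.span GF4 {v, u} with hf
  set T : Finset (Vv GF4) := Finset.univ.filter (Pred v) with hT
  have hvmem : ∀ u : Vv GF4, v ∈ f u := fun u => subset_span (by simp)
  have humem : ∀ u : Vv GF4, u ∈ f u := fun u => subset_span (by simp)
  have hlineu : ∀ u : Vv GF4, Bf v u = 1 → Module.finrank GF4 (f u) = 2 :=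
    fun u hBu => line_finrank hv0 hBu
  -- the set equals the image of T under f
  have hS : {L : Submodule GF4 (Vv GF4) | IsLine GF4 L ∧ Submodule.span GF4 {v} ≤ L ∧
      ∀ q : Submodule GF4 (Vv GF4), IsPoint GF4 q → q ≤ L → ¬ OnQuadric GF4 Qs q}
      = ↑(T.image f) := by
    ext L
    simp only [Set.mem_setOf_eq, Finset.coe_image, Set.mem_image, Finset.mem_coe, hT,
      Finset.mem_filter, Finset.mem_univ, true_and]
    constructor
    · rintro ⟨hL, hpL, hC⟩
      have hCv : ∀ w ∈ L, w ≠ 0 → Qs w ≠ 0 := by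
        intro w hw hw0
        by_contra h0
        exact hC (Submodule.span GF4 {w})
          (by rw [IsPoint, finrank_span_singleton hw0])
          (by rwa [Submodule.span_le, Set.singleton_subset_iff])
          (span_singleton_onQuadric h0)
      have hvL : v ∈ L := hpL (Submodule.mem_span_singleton_self v)
      have hlt : Submodule.span GF4 {v} < L := by
        refine lt_of_le_of_ne hpL ?_
        intro h
        rw [IsLine, ← h, finrank_span_singleton hv0] at hL
        exact (by norm_num : (1 : ℕ) ≠ 2) hL
      obtain ⟨u₀, hu₀L, hu₀p⟩ := SetLike.exists_of_lt hlt
      have hB0 : Bf v u₀ ≠ 0 := by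
        intro hB
        obtain ⟨s, hs⟩ := GF4.sq_surj (Qs u₀ * (Qs v)⁻¹)
        have hwmem : s • v + u₀ ∈ L := add_mem (smul_mem _ _ hvL) hu₀L
        have hw0 : s • v + u₀ ≠ 0 := by
          intro h0
          exact hu₀p (Submodule.mem_span_singleton.2
            ⟨-s, by
              rw [neg_smul, neg_eq_iff_add_eq_zero]
              exact h0⟩)
        refine hCv _ hwmem hw0 ?_
        have h1 : s • v + u₀ = s • v + (1 : GF4) • u₀ := by rw [one_smul]
        rw [h1, Qs_line, hB, hs]
        have h2 : Qs u₀ * (Qs v)⁻¹ * Qs v = Qs u₀ := by field_simp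
        rw [h2]
        have h3 : s * 1 * 0 = 0 := by ring
        rw [h3, add_zero, one_mul, one_mul]
        exact GF4.add_self _
      set u : Vv GF4 := (Bf v u₀)⁻¹ • u₀ with hu
      have hBu : Bf v u = 1 := by rw [hu, Bf_smul, inv_mul_cancel₀ hB0]
      have hspan : f u = L := by
        refine Submodule.eq_of_le_of_finrank_le ?_ ?_
        · show Submodule.span GF4 {v, u} ≤ L
          rw [Submodule.span_le]
          rintro x (rfl | rfl)
          · exact hvL
          · exact smul_mem _ _ hu₀L
        · rw [hL, hlineu u hBu]
      refine ⟨u, ⟨hBu, ?_⟩, hspan⟩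
      refine (ext_iff hQv hBu).1 ?_
      intro w hw hw0
      exact hCv w (hspan ▸ hw) hw0
    · rintro ⟨u, ⟨hBu, hPu⟩, rfl⟩
      refine ⟨hlineu u hBu, ?_, ?_⟩
      · rw [Submodule.span_le, Set.singleton_subset_iff]
        exact hvmem u
      · intro q hq hqL hOn
        have hqbot : q ≠ ⊥ := by
          intro h
          rw [IsPoint, h] at hq
          simp [finrank_bot] at hq
        obtain ⟨z, hzq, hz0⟩ := Submodule.exists_mem_ne_zero_of_ne_bot hqbot
        exact (ext_iff hQv hBu).2 hPu z (hqL hzq) hz0 (hOn z hzq)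
  -- fibers of f on T have cardinality 4
  have hfib : ∀ u ∈ T, (T.filter fun u' => f u' = f u).card = 4 := by
    intro u huT
    rw [hT, Finset.mem_filter] at huT
    obtain ⟨-, hBu, hPu⟩ := huT
    have hfiber : T.filter (fun u' => f u' = f u)
        = Finset.univ.image (fun a : GF4 => u + a • v) := by
      ext u'
      simp only [Finset.mem_filter, Finset.mem_image, Finset.mem_univ, true_and, hT]
      constructor
      · rintro ⟨⟨hBu', hPu'⟩, hff⟩
        have hmem : u' ∈ Submodule.span GF4 {v, u} := by
          have := humem u'
          rw [hff] at this
          exact this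
        obtain ⟨a, b, hab⟩ := Submodule.mem_span_pair.1 hmem
        have hb : b = 1 := by
          have hB := congrArg (Bf v) hab
          rwa [Bf_add, Bf_smul, Bf_smul, Bf_self, hBu, hBu', mul_zero, mul_one, zero_add] at hB
        refine ⟨a, ?_⟩
        rw [← hab, hb, one_smul, add_comm]
      · rintro ⟨a, rfl⟩
        have hB' : Bf v (u + a • v) = 1 := by
          rw [Bf_add, Bf_smul, Bf_self, hBu, mul_zero, add_zero]
        have hff : f (u + a • v) = f u := by
          apply le_antisymm
          · show Submodule.span GF4 {v, u + a • v} ≤ f u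
            rw [Submodule.span_le]
            rintro x (rfl | rfl)
            · exact hvmem u
            · exact add_mem (humem u) (smul_mem _ _ (hvmem u))
          · show f u ≤ Submodule.span GF4 {v, u + a • v}
            rw [Submodule.span_le]
            intro x hx
            rcases hx with h | h
            · rw [h]; exact subset_span (by simp)
            · rw [Set.mem_singleton_iff] at h
              rw [h, show u = (u + a • v) + (-a) • v by rw [neg_smul]; abel]
              exact add_mem (subset_span (by simp)) (smul_mem _ _ (subset_span (by simp)))
        refine ⟨⟨hB', ?_⟩, hff⟩
        have h1 := (ext_iff hQv hBu).2 hPu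
        have h2 : ∀ w ∈ Submodule.span GF4 {v, u + a • v}, w ≠ 0 → Qs w ≠ 0 := by
          intro w hw hw0
          refine h1 w ?_ hw0
          have hwfu : w ∈ f u := by rw [← hff]; exact hw
          exact hwfu
        exact (ext_iff hQv hB').1 h2
    rw [hfiber, Finset.card_image_of_injective _ ?_, Finset.card_univ, GF4.card4]
    intro a₁ a₂ h
    have := add_left_cancel h
    exact smul_left_injective GF4 hv0 this
  -- conclude
  have hcount := countT v hQv
  rw [← hT] at hcount
  have hsum := Finset.card_eq_sum_card_image f T
  have hsum4 : ∑ L ∈ T.image f, (T.filter fun u => f u = L).card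
      = (T.image f).card * 4 := by
    rw [Finset.sum_congr rfl (fun L hL => ?_), Finset.sum_const, smul_eq_mul]
    obtain ⟨u, huT, rfl⟩ := Finset.mem_image.1 hL
    exact hfib u huT
  rw [hS, Set.ncard_coe_finset]
  omega

end GF4Geometry

section Transfer

open Submodule

/-- Every point of `PG(3,4)` not lying on a hyperbolic quadric `H` is incident with
exactly 6 lines disjoint from `H`. -/
theorem stmt6 (F : Type) [Field F] [Fintype F] (hF : Fintype.card F = 4)
    (Q : Vv F → F) (hQ : IsHyperbolicForm F Q)
    (p : Submodule F (Vv F)) (hp : IsPoint F p) (hpH : ¬ OnQuadric F Q p) :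
    {L : Submodule F (Vv F) | IsLine F L ∧ p ≤ L ∧
      ∀ q : Submodule F (Vv F), IsPoint F q → q ≤ L → ¬ OnQuadric F Q q}.ncard
      = 6 := by
  classical
  obtain ⟨e₀, he⟩ := hQ
  have hcard : Fintype.card F = Fintype.card GF4 := by rw [hF, GF4.card4]
  let φ : F ≃+* GF4 := FiniteField.ringEquivOfCardEq hcard
  haveI := RingHomInvPair.of_ringEquiv φ
  haveI := RingHomInvPair.symm (φ : F →+* GF4) (φ.symm : GF4 →+* F)
  let E : Vv F ≃ₛₗ[(φ : F →+* GF4)] Vv GF4 :=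
    { toFun := fun x i => φ (e₀ x i)
      map_add' := fun x y => by
        funext i
        simp [map_add]
      map_smul' := fun c x => by
        funext i
        simp only [map_smul, Pi.smul_apply, smul_eq_mul, map_mul, RingHom.coe_coe]
      invFun := fun y => e₀.symm fun i => φ.symm (y i)
      left_inv := fun x => by
        simp only [RingEquiv.symm_apply_apply]
        exact congrArg e₀.symm rfl |>.trans (by simp)
      right_inv := fun y => by
        simp only [LinearEquiv.apply_symm_apply]
        funext i
        simp }
  set Φ := Submodule.orderIsoMapComap E with hΦ
  have hQE : ∀ x : Vv F, Qs (E x) = φ (Q x) := by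
    intro x
    show φ (e₀ x 0) * φ (e₀ x 1) + φ (e₀ x 2) * φ (e₀ x 3) = φ (Q x)
    rw [he x, map_add, map_mul, map_mul]
  have hfr : ∀ W : Submodule F (Vv F),
      Module.finrank GF4 ↥(Φ W) = Module.finrank F ↥W := by
    intro W
    haveI : Fintype ↥W := Fintype.ofFinite _
    haveI : Fintype ↥(Φ W) := Fintype.ofFinite _
    have h1 : Fintype.card ↥W = 4 ^ Module.finrank F ↥W := by
      rw [Module.card_eq_pow_finrank (K := F), hF]
    have h2 : Fintype.card ↥(Φ W) = 4 ^ Module.finrank GF4 ↥(Φ W) := by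
      rw [Module.card_eq_pow_finrank (K := GF4), GF4.card4]
    have h3 : Fintype.card ↥W = Fintype.card ↥(Φ W) := by
      exact Fintype.card_congr (E.submoduleMap W).toEquiv
    rw [h1, h2] at h3
    exact (Nat.pow_right_injective (by norm_num) h3).symm
  have hOnQ : ∀ W : Submodule F (Vv F),
      OnQuadric GF4 Qs (Φ W) ↔ OnQuadric F Q W := by
    intro W
    constructor
    · intro h w hw
      have h1 := h (E w) (Submodule.mem_map_of_mem hw)
      rw [hQE] at h1
      exact φ.injective (by rw [h1, map_zero])
    · rintro h w' hw'
      obtain ⟨w, hw, rfl⟩ := Submodule.mem_map.1 hw'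
      exact (hQE w).trans (by rw [h w hw, map_zero])
  have key : ∀ L : Submodule F (Vv F),
      (IsLine GF4 (Φ L) ∧ Φ p ≤ Φ L ∧
        ∀ q' : Submodule GF4 (Vv GF4), IsPoint GF4 q' → q' ≤ Φ L → ¬ OnQuadric GF4 Qs q')
      ↔ (IsLine F L ∧ p ≤ L ∧
        ∀ q : Submodule F (Vv F), IsPoint F q → q ≤ L → ¬ OnQuadric F Q q) := by
    intro L
    constructor
    · rintro ⟨hL, hpL, hC⟩
      refine ⟨by rw [IsLine, ← hfr L]; exact hL, Φ.le_iff_le.1 hpL, ?_⟩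
      intro q hq hqL hOn
      exact hC (Φ q) (by rw [IsPoint, hfr q]; exact hq) (Φ.le_iff_le.2 hqL)
        ((hOnQ q).2 hOn)
    · rintro ⟨hL, hpL, hC⟩
      refine ⟨by rw [IsLine, hfr L]; exact hL, Φ.le_iff_le.2 hpL, ?_⟩
      intro q' hq' hq'L hOn
      have hq'eq : Φ (Φ.symm q') = q' := Φ.apply_symm_apply q'
      refine hC (Φ.symm q') ?_ ?_ ?_
      · rw [IsPoint, ← hfr (Φ.symm q'), hq'eq]; exact hq'
      · rw [← Φ.le_iff_le, hq'eq]; exact hq'L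
      · rw [← hOnQ (Φ.symm q'), hq'eq]; exact hOn
  have h2 : {M : Submodule GF4 (Vv GF4) | IsLine GF4 M ∧ Φ p ≤ M ∧
      ∀ q' : Submodule GF4 (Vv GF4), IsPoint GF4 q' → q' ≤ M → ¬ OnQuadric GF4 Qs q'}
      = Φ '' {L : Submodule F (Vv F) | IsLine F L ∧ p ≤ L ∧
      ∀ q : Submodule F (Vv F), IsPoint F q → q ≤ L → ¬ OnQuadric F Q q} := by
    ext M
    constructor
    · intro hM
      refine ⟨Φ.symm M, (key (Φ.symm M)).1 ?_, Φ.apply_symm_apply M⟩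
      rw [Φ.apply_symm_apply]
      exact hM
    · rintro ⟨L, hL, rfl⟩
      exact (key L).2 hL
  have h6 := gf4_count (Φ p) (by rw [IsPoint, hfr p]; exact hp)
    (fun hOn => hpH ((hOnQ p).1 hOn))
  rw [h2, Set.ncard_image_of_injective _ Φ.injective] at h6
  exact h6

end Transfer
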